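/- Let K = [[G, Aᵀ],[A, 0]] be a symmetric block matrix where G is a symmetric n×n real matrix and A is an m×n real matrix of full row rank m. If the inertia of K is (n, m, 0) (n positive, m negative, no zero eigenvalues), then ZᵀGZ is positive definite for any matrix Z whose columns form a basis of the null space of A. -/

import Mathlib

open Matrix Module Submodule

theorem stmt_19 (n m : ℕ) (hmn : m ≤ n)
    (G : Matrix (Fin n) (Fin n) ℝ) (hG : G.IsHermitian)
    (A : Matrix (Fin m) (Fin n) ℝ) (hA : A.rank = m)
    (K : Matrix (Fin n ⊕ Fin m) (Fin n ⊕ Fin m) ℝ)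
    (hK : K = Matrix.fromBlocks G Aᵀ A 0)
    (hKh : K.IsHermitian)
    (hposCount : Nat.card {i // 0 < hKh.eigenvalues i} = n)
    (hnegCount : Nat.card {i // hKh.eigenvalues i < 0} = m)
    (hnozero : ∀ i, hKh.eigenvalues i ≠ 0)
    (Z : Matrix (Fin n) (Fin (n - m)) ℝ)
    (hZker : A * Z = 0) (hZrank : Z.rank = n - m) :
    (Zᵀ * G * Z).PosDef := by
  classical
  have hherm : (Zᵀ * G * Z).IsHermitian := by
    unfold Matrix.IsHermitian
    rw [Matrix.conjTranspose_mul, Matrix.conjTranspose_mul]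
    rw [show (Zᵀ)ᴴ = Z by ext i j; simp [Matrix.conjTranspose_apply],
      show Zᴴ = Zᵀ by ext i j; simp [Matrix.conjTranspose_apply], hG.eq, Matrix.mul_assoc]
  refine Matrix.PosDef.of_dotProduct_mulVec_pos hherm fun x hx => ?_
  by_contra hcon
  push_neg at hcon
  rw [star_trivial] at hcon
  -- Z *ᵥ x ≠ 0
  have hZinj : LinearMap.ker Z.mulVecLin = ⊥ := by
    have hrn := Z.mulVecLin.finrank_range_add_finrank_ker
    rw [show finrank ℝ (LinearMap.range Z.mulVecLin) = n - m from hZrank] at hrn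
    rw [Module.finrank_pi, Fintype.card_fin] at hrn
    have : finrank ℝ (LinearMap.ker Z.mulVecLin) = 0 := by omega
    exact Submodule.finrank_eq_zero.mp this
  have hw0 : Z *ᵥ x ≠ 0 := by
    intro h
    exact hx ((LinearMap.ker_eq_bot.mp hZinj) (show Z.mulVecLin x = Z.mulVecLin 0 by
        simp [Matrix.mulVecLin_apply, h]))
  -- the positive eigenspace
  have hli : LinearIndependent ℝ
      (fun i : {i // 0 < hKh.eigenvalues i} =>
        (hKh.eigenvectorBasis i : EuclideanSpace ℝ (Fin n ⊕ Fin m))) :=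
    hKh.eigenvectorBasis.orthonormal.linearIndependent.comp Subtype.val Subtype.val_injective
  have hPfin : finrank ℝ (Submodule.span ℝ
      (Set.range fun i : {i // 0 < hKh.eigenvalues i} =>
        (hKh.eigenvectorBasis i : EuclideanSpace ℝ (Fin n ⊕ Fin m)))) = n := by
    rw [finrank_span_eq_card hli, ← Nat.card_eq_fintype_card, hposCount]
  -- the subspace Q of vectors vanishing on the first block
  have hQli : LinearIndependent ℝ
      (fun j : Fin m => (EuclideanSpace.single (Sum.inr j : Fin n ⊕ Fin m) (1:ℝ))) := by
    have h2 := (EuclideanSpace.basisFun (Fin n ⊕ Fin m) ℝ).orthonormal.linearIndependent.comp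
      Sum.inr Sum.inr_injective
    have h3 : (⇑(EuclideanSpace.basisFun (Fin n ⊕ Fin m) ℝ) ∘ Sum.inr)
        = fun j : Fin m => (EuclideanSpace.single (Sum.inr j : Fin n ⊕ Fin m) (1:ℝ)) := by
      funext j; simp [EuclideanSpace.basisFun_apply]
    exact h3 ▸ h2
  have hQfin : finrank ℝ (Submodule.span ℝ
      (Set.range fun j : Fin m =>
        (EuclideanSpace.single (Sum.inr j : Fin n ⊕ Fin m) (1:ℝ)))) = m := by
    rw [finrank_span_eq_card hQli, Fintype.card_fin]
  have hQzero : ∀ q ∈ Submodule.span ℝ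
      (Set.range fun j : Fin m =>
        (EuclideanSpace.single (Sum.inr j : Fin n ⊕ Fin m) (1:ℝ))),
      ∀ i : Fin n, q (Sum.inl i) = 0 := by
    intro q hq i
    rw [mem_span_range_iff_exists_fun] at hq
    obtain ⟨c, rfl⟩ := hq
    rw [WithLp.ofLp_sum, Finset.sum_apply]
    simp [PiLp.smul_apply, EuclideanSpace.single_apply]
  have hwapp : ∀ p : Fin n ⊕ Fin m,
      ((WithLp.equiv 2 ((Fin n ⊕ Fin m) → ℝ)).symm (Sum.elim (Z *ᵥ x) 0) :
        EuclideanSpace ℝ (Fin n ⊕ Fin m)) p = Sum.elim (Z *ᵥ x) 0 p := fun p => rfl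
  set w : EuclideanSpace ℝ (Fin n ⊕ Fin m) :=
    (WithLp.equiv 2 ((Fin n ⊕ Fin m) → ℝ)).symm (Sum.elim (Z *ᵥ x) 0) with hw
  set Q : Submodule ℝ (EuclideanSpace ℝ (Fin n ⊕ Fin m)) := Submodule.span ℝ
      (Set.range fun j : Fin m =>
        (EuclideanSpace.single (Sum.inr j : Fin n ⊕ Fin m) (1:ℝ))) with hQdef
  set P : Submodule ℝ (EuclideanSpace ℝ (Fin n ⊕ Fin m)) := Submodule.span ℝ
      (Set.range fun i : {i // 0 < hKh.eigenvalues i} =>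
        (hKh.eigenvectorBasis i : EuclideanSpace ℝ (Fin n ⊕ Fin m))) with hPdef
  have hwQ : w ∉ Q := by
    intro h
    obtain ⟨i, hi⟩ := Function.ne_iff.mp hw0
    exact hi (by simpa [hwapp] using hQzero w h i)
  have hwne : w ≠ 0 := fun h => hwQ (h ▸ Q.zero_mem)
  have hSfin : finrank ℝ ((Submodule.span ℝ {w}) ⊔ Q : Submodule ℝ _) = m + 1 := by
    have hinf : (Submodule.span ℝ {w}) ⊓ Q = ⊥ := by
      rw [eq_bot_iff]
      rintro u ⟨hu1, hu2⟩
      obtain ⟨c, rfl⟩ := Submodule.mem_span_singleton.mp hu1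
      rcases eq_or_ne c 0 with rfl | hc
      · simp
      · have h3 := Q.smul_mem c⁻¹ hu2
        rw [smul_smul, inv_mul_cancel₀ hc, one_smul] at h3
        exact absurd h3 hwQ
    have h4 := Submodule.finrank_sup_add_finrank_inf_eq (Submodule.span ℝ {w}) Q
    rw [hinf, finrank_bot, finrank_span_singleton hwne, hQfin] at h4
    omega
  have hVfin : finrank ℝ (EuclideanSpace ℝ (Fin n ⊕ Fin m)) = n + m := by
    simp [finrank_euclideanSpace]
  -- P and S intersect nontrivially
  have hPS : P ⊓ ((Submodule.span ℝ {w}) ⊔ Q) ≠ ⊥ := by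
    intro h
    have h4 := Submodule.finrank_sup_add_finrank_inf_eq P ((Submodule.span ℝ {w}) ⊔ Q)
    rw [h, finrank_bot, hPfin, hSfin] at h4
    have hle : finrank ℝ ↥(P ⊔ ((Submodule.span ℝ {w}) ⊔ Q)) ≤ n + m :=
      hVfin ▸ Submodule.finrank_le _
    omega
  obtain ⟨v, hv, hvne⟩ := Submodule.exists_mem_ne_zero_of_ne_bot hPS
  have hvP : v ∈ P := hv.1
  have hvS : v ∈ (Submodule.span ℝ {w}) ⊔ Q := hv.2
  -- the quadratic form is positive on P
  have hpos : 0 < (v : (Fin n ⊕ Fin m) → ℝ) ⬝ᵥ K *ᵥ (v : (Fin n ⊕ Fin m) → ℝ) := by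
    rw [hPdef, mem_span_range_iff_exists_fun] at hvP
    obtain ⟨c, hc⟩ := hvP
    have hKv : WithLp.toLp 2 (
          K *ᵥ (v : (Fin n ⊕ Fin m) → ℝ)) =
        ∑ i : {i // 0 < hKh.eigenvalues i},
          (c i * hKh.eigenvalues i) • hKh.eigenvectorBasis i := by
      conv_lhs => rw [← hc]
      rw [WithLp.ofLp_sum, Matrix.mulVec_sum, WithLp.toLp_sum]
      refine Finset.sum_congr rfl fun i _ => ?_
      rw [WithLp.ofLp_smul, Matrix.mulVec_smul, hKh.mulVec_eigenvectorBasis, smul_smul]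
      rfl
    have hinner : (v : (Fin n ⊕ Fin m) → ℝ) ⬝ᵥ K *ᵥ (v : (Fin n ⊕ Fin m) → ℝ)
        = inner (𝕜 := ℝ) v (WithLp.toLp 2 (
            K *ᵥ (v : (Fin n ⊕ Fin m) → ℝ))) := by
      rw [EuclideanSpace.inner_eq_star_dotProduct]
      simp [dotProduct, mul_comm]
    rw [hinner, hKv, ← hc]
    rw [sum_inner]
    have hterm : ∀ i : {i // 0 < hKh.eigenvalues i},
        inner (𝕜 := ℝ) (c i • (hKh.eigenvectorBasis i : EuclideanSpace ℝ (Fin n ⊕ Fin m)))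
          (∑ j : {i // 0 < hKh.eigenvalues i},
            (c j * hKh.eigenvalues j) • hKh.eigenvectorBasis j)
        = c i * (c i * hKh.eigenvalues i) := by
      intro i
      rw [inner_sum]
      simp_rw [real_inner_smul_left, real_inner_smul_right,
        orthonormal_iff_ite.mp hKh.eigenvectorBasis.orthonormal]
      rw [Finset.sum_eq_single i (fun j _ hj => by
        have h8 : (↑i : Fin n ⊕ Fin m) ≠ ↑j := Subtype.coe_injective.ne (Ne.symm hj)
        simp [h8]) (fun h => absurd (Finset.mem_univ i) h)]
      simp
    rw [Finset.sum_congr rfl fun i _ => hterm i]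
    -- positivity of the sum
    have hex : ∃ i : {i // 0 < hKh.eigenvalues i}, c i ≠ 0 := by
      by_contra hall
      push_neg at hall
      apply hvne
      rw [← hc]
      simp [hall]
    obtain ⟨i₀, hi₀⟩ := hex
    refine Finset.sum_pos' (fun i _ => ?_) ⟨i₀, Finset.mem_univ _, ?_⟩
    · have := i.2
      nlinarith [sq_nonneg (c i)]
    · have := i₀.2
      have h6 : 0 < c i₀ * c i₀ := mul_self_pos.mpr hi₀
      nlinarith
  -- the quadratic form is nonpositive on S
  have hneg : (v : (Fin n ⊕ Fin m) → ℝ) ⬝ᵥ K *ᵥ (v : (Fin n ⊕ Fin m) → ℝ) ≤ 0 := by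
    obtain ⟨a, ha, q, hq, hv⟩ := Submodule.mem_sup.mp hvS
    obtain ⟨cc, rfl⟩ := Submodule.mem_span_singleton.mp ha
    have hu1 : (v : (Fin n ⊕ Fin m) → ℝ) ∘ Sum.inl = cc • (Z *ᵥ x) := by
      funext i
      have h7 : v (Sum.inl i) = (cc • w + q) (Sum.inl i) := by rw [hv]
      rw [Function.comp_apply, h7, PiLp.add_apply, PiLp.smul_apply, hQzero q hq i, hwapp]
      simp
    have hAu1 : A *ᵥ ((v : (Fin n ⊕ Fin m) → ℝ) ∘ Sum.inl) = 0 := by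
      rw [hu1, Matrix.mulVec_smul, Matrix.mulVec_mulVec, hZker, Matrix.zero_mulVec, smul_zero]
    have key : (v : (Fin n ⊕ Fin m) → ℝ) ⬝ᵥ K *ᵥ (v : (Fin n ⊕ Fin m) → ℝ)
        = (cc * cc) * (x ⬝ᵥ (Zᵀ * G * Z) *ᵥ x) := by
      calc (v : (Fin n ⊕ Fin m) → ℝ) ⬝ᵥ K *ᵥ (v : (Fin n ⊕ Fin m) → ℝ)
          = Sum.elim ((v : (Fin n ⊕ Fin m) → ℝ) ∘ Sum.inl)
              ((v : (Fin n ⊕ Fin m) → ℝ) ∘ Sum.inr) ⬝ᵥ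
            Sum.elim (G *ᵥ ((v : (Fin n ⊕ Fin m) → ℝ) ∘ Sum.inl)
                + Aᵀ *ᵥ ((v : (Fin n ⊕ Fin m) → ℝ) ∘ Sum.inr))
              (A *ᵥ ((v : (Fin n ⊕ Fin m) → ℝ) ∘ Sum.inl)
                + (0 : Matrix (Fin m) (Fin m) ℝ) *ᵥ ((v : (Fin n ⊕ Fin m) → ℝ) ∘ Sum.inr)) := by
            rw [hK, Matrix.fromBlocks_mulVec]
            congr 1
            exact (Sum.elim_comp_inl_inr _).symm
        _ = ((v : (Fin n ⊕ Fin m) → ℝ) ∘ Sum.inl) ⬝ᵥ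
              (G *ᵥ ((v : (Fin n ⊕ Fin m) → ℝ) ∘ Sum.inl)) := by
            rw [sumElim_dotProduct_sumElim, dotProduct_add,
              dotProduct_add, Matrix.zero_mulVec, dotProduct_zero,
              Matrix.dotProduct_mulVec _ Aᵀ _, Matrix.vecMul_transpose, hAu1]
            simp
        _ = (cc * cc) * (x ⬝ᵥ (Zᵀ * G * Z) *ᵥ x) := by
            rw [hu1, smul_dotProduct, Matrix.mulVec_smul, dotProduct_smul,
              smul_smul, smul_eq_mul]
            congr 1
            rw [Matrix.mul_assoc, ← Matrix.mulVec_mulVec, Matrix.dotProduct_mulVec x Zᵀ _,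
              Matrix.vecMul_transpose, Matrix.mulVec_mulVec]
    rw [key]
    exact mul_nonpos_of_nonneg_of_nonpos (mul_self_nonneg cc) hcon
  exact absurd hneg (not_le.mpr hpos)
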